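/- Let M ≥ 2, a > 0, and let u, f : ℝ² → ℝ be such that on an open convex neighborhood U of a point (x*,y*), u is (M+1) times continuously differentiable, f is (M−1) times continuously differentiable, and a·(∂²u/∂x² + ∂²u/∂y²) = −f on U. Then there exist C > 0 and h₀ > 0 such that for all h ∈ (0,h₀] and all (x,y) with |x| ≤ 2h and |y| ≤ 2h: |u(x*+x, y*+y) − ∑_{(m,n)∈Λ_M, m≤1} u^(m,n)(x*,y*)·G_{m,n}(x,y) − (1/a)·∑_{(m,n)∈Λ_{M−2}} f^(m,n)(x*,y*)·H_{m,n}(x,y)| ≤ C·h^{M+1}; that is, near (x*,y*), u is determined up to O(h^{M+1}) by its partial derivatives u^(0,n) and u^(1,n) together with the derivatives of f. -/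

import Mathlib

open Finset

/-- partial derivative in `x`. -/
noncomputable def pdx (v : ℝ → ℝ → ℝ) : ℝ → ℝ → ℝ := fun x y => deriv (fun t => v t y) x
/-- partial derivative in `y`. -/
noncomputable def pdy (v : ℝ → ℝ → ℝ) : ℝ → ℝ → ℝ := fun x y => deriv (fun t => v x t) y
/-- mixed partial derivative `∂^{m+n} v / ∂x^m ∂y^n`. -/
noncomputable def pd (m n : ℕ) (v : ℝ → ℝ → ℝ) : ℝ → ℝ → ℝ := pdx^[m] (pdy^[n] v)

/-- the bivariate polynomial `G_{m,n}`. -/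
noncomputable def Gpoly (m n : ℕ) (x y : ℝ) : ℝ :=
  ∑ l ∈ Finset.range (n / 2 + 1),
    (-1 : ℝ) ^ l * x ^ (m + 2 * l) * y ^ (n - 2 * l) /
      (Nat.factorial (m + 2 * l) * Nat.factorial (n - 2 * l) : ℝ)

/-- the bivariate polynomial `H_{m,n}`. -/
noncomputable def Hpoly (m n : ℕ) (x y : ℝ) : ℝ :=
  ∑ l ∈ Finset.Icc 1 (1 + n / 2),
    (-1 : ℝ) ^ l * x ^ (m + 2 * l) * y ^ (n + 2 - 2 * l) /
      (Nat.factorial (m + 2 * l) * Nat.factorial (n + 2 - 2 * l) : ℝ)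

/-- the index set `Λ_M = {(m,n) : m + n ≤ M}`. -/
def Lam (M : ℕ) : Finset (ℕ × ℕ) :=
  (Finset.range (M + 1) ×ˢ Finset.range (M + 1)).filter (fun p => p.1 + p.2 ≤ M)

/-- `Λ_M¹ = {(m,n) : m + n ≤ M, m ≤ 1}`. -/
def Lam1 (M : ℕ) : Finset (ℕ × ℕ) := (Lam M).filter (fun p => p.1 ≤ 1)


open Function
-- from s1.lean


variable {U : Set (ℝ × ℝ)} {v w : ℝ → ℝ → ℝ} {p : ℝ × ℝ}

lemma hasDerivAt_sliceX (h : DifferentiableAt ℝ (uncurry v) p) :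
    HasDerivAt (fun t => v t p.2) (fderiv ℝ (uncurry v) p (1, 0)) p.1 := by
  have h1 : HasDerivAt (fun t : ℝ => (t, p.2)) ((1 : ℝ), (0 : ℝ)) p.1 :=
    (hasDerivAt_id p.1).prodMk (hasDerivAt_const p.1 p.2)
  have := h.hasFDerivAt.comp_hasDerivAt (x := p.1) (by simpa using h1)
  exact this

lemma hasDerivAt_sliceY (h : DifferentiableAt ℝ (uncurry v) p) :
    HasDerivAt (fun t => v p.1 t) (fderiv ℝ (uncurry v) p (0, 1)) p.2 := by
  have h1 : HasDerivAt (fun t : ℝ => (p.1, t)) ((0 : ℝ), (1 : ℝ)) p.2 :=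
    (hasDerivAt_const p.2 p.1).prodMk (hasDerivAt_id p.2)
  have := h.hasFDerivAt.comp_hasDerivAt (x := p.2) (by simpa using h1)
  exact this

lemma pdx_eq_fderiv (h : DifferentiableAt ℝ (uncurry v) p) :
    pdx v p.1 p.2 = fderiv ℝ (uncurry v) p (1, 0) := (hasDerivAt_sliceX h).deriv

lemma pdy_eq_fderiv (h : DifferentiableAt ℝ (uncurry v) p) :
    pdy v p.1 p.2 = fderiv ℝ (uncurry v) p (0, 1) := (hasDerivAt_sliceY h).deriv

lemma diffAt_of_contDiffOn (hU : IsOpen U) {n : ℕ} (hv : ContDiffOn ℝ ((n + 1 : ℕ)) (uncurry v) U)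
    (hp : p ∈ U) : DifferentiableAt ℝ (uncurry v) p :=
  (hv.contDiffAt (hU.mem_nhds hp)).differentiableAt (by simp)

lemma contDiffOn_pdx (hU : IsOpen U) {n : ℕ} (hv : ContDiffOn ℝ ((n + 1 : ℕ)) (uncurry v) U) :
    ContDiffOn ℝ n (uncurry (pdx v)) U := by
  have h1 : ContDiffOn ℝ n (fun q : ℝ × ℝ => fderiv ℝ (uncurry v) q) U :=
    hv.fderiv_of_isOpen hU (by exact_mod_cast le_rfl)
  have h2 : ContDiffOn ℝ n (fun q : ℝ × ℝ => fderiv ℝ (uncurry v) q (1, 0)) U :=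
    h1.clm_apply contDiffOn_const
  exact h2.congr fun q hq => pdx_eq_fderiv (diffAt_of_contDiffOn hU hv hq)

lemma contDiffOn_pdy (hU : IsOpen U) {n : ℕ} (hv : ContDiffOn ℝ ((n + 1 : ℕ)) (uncurry v) U) :
    ContDiffOn ℝ n (uncurry (pdy v)) U := by
  have h1 : ContDiffOn ℝ n (fun q : ℝ × ℝ => fderiv ℝ (uncurry v) q) U :=
    hv.fderiv_of_isOpen hU (by exact_mod_cast le_rfl)
  have h2 : ContDiffOn ℝ n (fun q : ℝ × ℝ => fderiv ℝ (uncurry v) q (0, 1)) U :=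
    h1.clm_apply contDiffOn_const
  exact h2.congr fun q hq => pdy_eq_fderiv (diffAt_of_contDiffOn hU hv hq)

-- from s2.lean
lemma contDiffOn_pdx_iter (hU : IsOpen U) {n : ℕ} (m : ℕ)
    (hv : ContDiffOn ℝ ((n + m : ℕ)) (uncurry v) U) : ContDiffOn ℝ n (uncurry (pdx^[m] v)) U := by
  induction m generalizing n v with
  | zero => simpa using hv
  | succ m ih =>
    rw [Function.iterate_succ_apply']
    exact contDiffOn_pdx hU (ih (n := n + 1) (hv.of_le (by exact_mod_cast Nat.le_of_eq (by omega))))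

lemma contDiffOn_pdy_iter (hU : IsOpen U) {n : ℕ} (m : ℕ)
    (hv : ContDiffOn ℝ ((n + m : ℕ)) (uncurry v) U) : ContDiffOn ℝ n (uncurry (pdy^[m] v)) U := by
  induction m generalizing n v with
  | zero => simpa using hv
  | succ m ih =>
    rw [Function.iterate_succ_apply']
    exact contDiffOn_pdy hU (ih (n := n + 1) (hv.of_le (by exact_mod_cast Nat.le_of_eq (by omega))))

lemma contDiffOn_pd (hU : IsOpen U) {n m k : ℕ}
    (hv : ContDiffOn ℝ ((n + (m + k) : ℕ)) (uncurry v) U) : ContDiffOn ℝ n (uncurry (pd m k v)) U := by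
  unfold pd
  exact contDiffOn_pdx_iter hU m (contDiffOn_pdy_iter hU k
    (hv.of_le (by exact_mod_cast Nat.le_of_eq (by omega))))

-- from s3.lean
lemma pdx_congr_on (hU : IsOpen U) (h : ∀ q ∈ U, v q.1 q.2 = w q.1 q.2) (hp : p ∈ U) :
    pdx v p.1 p.2 = pdx w p.1 p.2 := by
  have hS : IsOpen {t : ℝ | (t, p.2) ∈ U} := hU.preimage (continuous_id.prodMk continuous_const)
  have hp1 : p.1 ∈ {t : ℝ | (t, p.2) ∈ U} := by simpa using hp
  have hev : (fun t => v t p.2) =ᶠ[nhds p.1] fun t => w t p.2 := by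
    filter_upwards [hS.mem_nhds hp1] with t ht using h (t, p.2) ht
  exact hev.deriv_eq

lemma pdy_congr_on (hU : IsOpen U) (h : ∀ q ∈ U, v q.1 q.2 = w q.1 q.2) (hp : p ∈ U) :
    pdy v p.1 p.2 = pdy w p.1 p.2 := by
  have hS : IsOpen {t : ℝ | (p.1, t) ∈ U} := hU.preimage (continuous_const.prodMk continuous_id)
  have hp1 : p.2 ∈ {t : ℝ | (p.1, t) ∈ U} := by simpa using hp
  have hev : (fun t => v p.1 t) =ᶠ[nhds p.2] fun t => w p.1 t := by
    filter_upwards [hS.mem_nhds hp1] with t ht using h (p.1, t) ht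
  exact hev.deriv_eq

lemma pdx_iter_congr_on (hU : IsOpen U) (m : ℕ) (h : ∀ q ∈ U, v q.1 q.2 = w q.1 q.2) (hp : p ∈ U) :
    pdx^[m] v p.1 p.2 = pdx^[m] w p.1 p.2 := by
  induction m generalizing v w p with
  | zero => exact h p hp
  | succ m ih =>
    rw [Function.iterate_succ_apply', Function.iterate_succ_apply']
    exact pdx_congr_on hU (fun q hq => ih h hq) hp

lemma pdy_iter_congr_on (hU : IsOpen U) (m : ℕ) (h : ∀ q ∈ U, v q.1 q.2 = w q.1 q.2) (hp : p ∈ U) :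
    pdy^[m] v p.1 p.2 = pdy^[m] w p.1 p.2 := by
  induction m generalizing v w p with
  | zero => exact h p hp
  | succ m ih =>
    rw [Function.iterate_succ_apply', Function.iterate_succ_apply']
    exact pdy_congr_on hU (fun q hq => ih h hq) hp

lemma pd_congr_on (hU : IsOpen U) (m k : ℕ) (h : ∀ q ∈ U, v q.1 q.2 = w q.1 q.2) (hp : p ∈ U) :
    pd m k v p.1 p.2 = pd m k w p.1 p.2 := by
  unfold pd
  exact pdx_iter_congr_on hU m (fun q hq => pdy_iter_congr_on hU k h hq) hp

lemma schwarz (hU : IsOpen U) {n : ℕ} (hv : ContDiffOn ℝ ((n + 2 : ℕ)) (uncurry v) U)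
    (hp : p ∈ U) : pdx (pdy v) p.1 p.2 = pdy (pdx v) p.1 p.2 := by
  have hd2 : ContDiffOn ℝ ((n + 1 : ℕ)) (fun q : ℝ × ℝ => fderiv ℝ (uncurry v) q) U :=
    hv.fderiv_of_isOpen hU (by exact_mod_cast le_rfl)
  have hdiff2 : DifferentiableAt ℝ (fun q : ℝ × ℝ => fderiv ℝ (uncurry v) q) p :=
    (hd2.contDiffAt (hU.mem_nhds hp)).differentiableAt
      (by simp)
  have hsym : IsSymmSndFDerivAt ℝ (uncurry v) p :=
    (hv.contDiffAt (hU.mem_nhds hp)).isSymmSndFDerivAt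
      (by rw [minSmoothness_of_isRCLikeNormedField]; exact_mod_cast Nat.le_add_left 2 n)
  have key : ∀ e e' : ℝ × ℝ,
      fderiv ℝ (fun q : ℝ × ℝ => fderiv ℝ (uncurry v) q e') p e
        = fderiv ℝ (fderiv ℝ (uncurry v)) p e e' := by
    intro e e'
    have : HasFDerivAt (fun q : ℝ × ℝ => fderiv ℝ (uncurry v) q e')
        ((ContinuousLinearMap.apply ℝ ℝ e').comp (fderiv ℝ (fderiv ℝ (uncurry v)) p)) p :=
      (ContinuousLinearMap.apply ℝ ℝ e').hasFDerivAt.comp p hdiff2.hasFDerivAt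
    rw [this.fderiv]; rfl
  have hdvy : DifferentiableAt ℝ (uncurry (pdy v)) p :=
    diffAt_of_contDiffOn hU (n := n) (contDiffOn_pdy hU (n := n + 1) hv) hp
  have hdvx : DifferentiableAt ℝ (uncurry (pdx v)) p :=
    diffAt_of_contDiffOn hU (n := n) (contDiffOn_pdx hU (n := n + 1) hv) hp
  have hevy : uncurry (pdy v) =ᶠ[nhds p] fun q : ℝ × ℝ => fderiv ℝ (uncurry v) q (0, 1) := by
    filter_upwards [hU.mem_nhds hp] with q hq
    exact pdy_eq_fderiv (diffAt_of_contDiffOn hU (n := n + 1) hv hq)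
  have hevx : uncurry (pdx v) =ᶠ[nhds p] fun q : ℝ × ℝ => fderiv ℝ (uncurry v) q (1, 0) := by
    filter_upwards [hU.mem_nhds hp] with q hq
    exact pdx_eq_fderiv (diffAt_of_contDiffOn hU (n := n + 1) hv hq)
  calc pdx (pdy v) p.1 p.2 = fderiv ℝ (uncurry (pdy v)) p (1, 0) := pdx_eq_fderiv hdvy
    _ = fderiv ℝ (fun q : ℝ × ℝ => fderiv ℝ (uncurry v) q (0, 1)) p (1, 0) := by
        rw [hevy.fderiv_eq]
    _ = fderiv ℝ (fderiv ℝ (uncurry v)) p (1, 0) (0, 1) := key _ _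
    _ = fderiv ℝ (fderiv ℝ (uncurry v)) p (0, 1) (1, 0) := hsym _ _
    _ = fderiv ℝ (fun q : ℝ × ℝ => fderiv ℝ (uncurry v) q (1, 0)) p (0, 1) := (key _ _).symm
    _ = fderiv ℝ (uncurry (pdx v)) p (0, 1) := by rw [hevx.fderiv_eq]
    _ = pdy (pdx v) p.1 p.2 := (pdy_eq_fderiv hdvx).symm

-- from s4.lean
/-- moving a single `pdy` past `pdx^[m]`, requires `C^{m+2}`. -/
lemma swap_pdy_pdx_iter (hU : IsOpen U) (m : ℕ) (hv : ContDiffOn ℝ ((m + 2 : ℕ)) (uncurry v) U)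
    (hp : p ∈ U) : pdy (pdx^[m] v) p.1 p.2 = pdx^[m] (pdy v) p.1 p.2 := by
  induction m generalizing v p with
  | zero => rfl
  | succ m ih =>
    rw [Function.iterate_succ_apply']
    have h1 : pdy (pdx (pdx^[m] v)) p.1 p.2 = pdx (pdy (pdx^[m] v)) p.1 p.2 := by
      refine (schwarz hU (n := 0) (v := pdx^[m] v) ?_ hp).symm
      exact contDiffOn_pdx_iter hU (n := 2) m (hv.of_le (by exact_mod_cast by omega))
    rw [h1]
    have h2 : pdx (pdy (pdx^[m] v)) p.1 p.2 = pdx (pdx^[m] (pdy v)) p.1 p.2 :=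
      pdx_congr_on hU (fun q hq => ih (hv.of_le (by exact_mod_cast by omega)) hq) hp
    rw [h2, show pdx^[m+1] (pdy v) = pdx (pdx^[m] (pdy v)) from Function.iterate_succ_apply' _ _ _]

/-- moving `pdx^[k]` past `pdy^[n]`, requires `C^{n+k+1}`. -/
lemma swap_pdy_iter_pdx_iter (hU : IsOpen U) (n k : ℕ)
    (hv : ContDiffOn ℝ ((n + k + 1 : ℕ)) (uncurry v) U) (hp : p ∈ U) :
    pdy^[n] (pdx^[k] v) p.1 p.2 = pdx^[k] (pdy^[n] v) p.1 p.2 := by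
  induction n generalizing v p with
  | zero => rfl
  | succ n ih =>
    rw [Function.iterate_succ_apply, Function.iterate_succ_apply]
    have h1 : pdy^[n] (pdy (pdx^[k] v)) p.1 p.2 = pdy^[n] (pdx^[k] (pdy v)) p.1 p.2 := by
      refine pdy_iter_congr_on hU n (fun q hq => ?_) hp
      exact swap_pdy_pdx_iter hU k (hv.of_le (by exact_mod_cast by omega)) hq
    rw [h1]
    exact ih (contDiffOn_pdy hU (n := n + k + 1) (hv.of_le (by exact_mod_cast by omega))) hp

/-- `pdy (pd m k v) = pd m (k+1) v` pointwise on `U`. -/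
lemma pdy_pd (hU : IsOpen U) (m k : ℕ) (hv : ContDiffOn ℝ ((m + k + 2 : ℕ)) (uncurry v) U)
    (hp : p ∈ U) : pdy (pd m k v) p.1 p.2 = pd m (k + 1) v p.1 p.2 := by
  unfold pd
  have h1 : pdy (pdx^[m] (pdy^[k] v)) p.1 p.2 = pdx^[m] (pdy (pdy^[k] v)) p.1 p.2 :=
    swap_pdy_pdx_iter hU m (contDiffOn_pdy_iter hU (n := m + 2) k
      (hv.of_le (by exact_mod_cast by omega))) hp
  rw [h1, show pdy^[k+1] v = pdy (pdy^[k] v) from Function.iterate_succ_apply' _ _ _]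

-- from s5.lean
lemma pdx_add (hv : DifferentiableAt ℝ (uncurry v) p) (hw : DifferentiableAt ℝ (uncurry w) p) :
    pdx (fun x y => v x y + w x y) p.1 p.2 = pdx v p.1 p.2 + pdx w p.1 p.2 := by
  unfold pdx
  rw [(hasDerivAt_sliceX hv).deriv, (hasDerivAt_sliceX hw).deriv]
  exact ((hasDerivAt_sliceX hv).add (hasDerivAt_sliceX hw)).deriv

lemma pdy_add (hv : DifferentiableAt ℝ (uncurry v) p) (hw : DifferentiableAt ℝ (uncurry w) p) :
    pdy (fun x y => v x y + w x y) p.1 p.2 = pdy v p.1 p.2 + pdy w p.1 p.2 := by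
  unfold pdy
  rw [(hasDerivAt_sliceY hv).deriv, (hasDerivAt_sliceY hw).deriv]
  exact ((hasDerivAt_sliceY hv).add (hasDerivAt_sliceY hw)).deriv

lemma pdy_iter_add (hU : IsOpen U) (k : ℕ) (hv : ContDiffOn ℝ ((k : ℕ)) (uncurry v) U)
    (hw : ContDiffOn ℝ ((k : ℕ)) (uncurry w) U) (hp : p ∈ U) :
    pdy^[k] (fun x y => v x y + w x y) p.1 p.2 = pdy^[k] v p.1 p.2 + pdy^[k] w p.1 p.2 := by
  induction k generalizing p with
  | zero => rfl
  | succ k ih =>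
    rw [Function.iterate_succ_apply', Function.iterate_succ_apply',
      Function.iterate_succ_apply' (f := pdy) (n := k) (x := w)]
    have h1 : pdy (pdy^[k] (fun x y => v x y + w x y)) p.1 p.2
        = pdy (fun x y => pdy^[k] v x y + pdy^[k] w x y) p.1 p.2 :=
      pdy_congr_on hU (fun q hq => ih (hv.of_le (by exact_mod_cast by omega))
        (hw.of_le (by exact_mod_cast by omega)) hq) hp
    rw [h1]
    exact pdy_add
      (diffAt_of_contDiffOn hU (n := 0) (contDiffOn_pdy_iter hU (n := 1) k (hv.of_le (by exact_mod_cast by omega))) hp)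
      (diffAt_of_contDiffOn hU (n := 0) (contDiffOn_pdy_iter hU (n := 1) k (hw.of_le (by exact_mod_cast by omega))) hp)

lemma pd_add (hU : IsOpen U) (m k : ℕ) (hv : ContDiffOn ℝ ((m + k : ℕ)) (uncurry v) U)
    (hw : ContDiffOn ℝ ((m + k : ℕ)) (uncurry w) U) (hp : p ∈ U) :
    pd m k (fun x y => v x y + w x y) p.1 p.2 = pd m k v p.1 p.2 + pd m k w p.1 p.2 := by
  induction m generalizing p with
  | zero =>
    exact pdy_iter_add hU k (hv.of_le (by exact_mod_cast by omega))
      (hw.of_le (by exact_mod_cast by omega)) hp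
  | succ m ih =>
    unfold pd at *
    rw [Function.iterate_succ_apply', Function.iterate_succ_apply',
      Function.iterate_succ_apply' (f := pdx) (n := m)]
    have h1 : pdx (pdx^[m] (pdy^[k] fun x y => v x y + w x y)) p.1 p.2
        = pdx (fun x y => pdx^[m] (pdy^[k] v) x y + pdx^[m] (pdy^[k] w) x y) p.1 p.2 :=
      pdx_congr_on hU (fun q hq => ih (hv.of_le (by exact_mod_cast by omega))
        (hw.of_le (by exact_mod_cast by omega)) hq) hp
    rw [h1]
    exact pdx_add
      (diffAt_of_contDiffOn hU (n := 0)
        (contDiffOn_pd hU (n := 1) (m := m) (k := k) (hv.of_le (by exact_mod_cast by omega))) hp)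
      (diffAt_of_contDiffOn hU (n := 0)
        (contDiffOn_pd hU (n := 1) (m := m) (k := k) (hw.of_le (by exact_mod_cast by omega))) hp)

lemma pdx_const_mul (c : ℝ) (v : ℝ → ℝ → ℝ) :
    pdx (fun x y => c * v x y) = fun x y => c * pdx v x y := by
  funext x y; simp [pdx, deriv_const_mul_field]

lemma pdy_const_mul (c : ℝ) (v : ℝ → ℝ → ℝ) :
    pdy (fun x y => c * v x y) = fun x y => c * pdy v x y := by
  funext x y; simp [pdy, deriv_const_mul_field]

lemma pd_const_mul (m k : ℕ) (c : ℝ) (v : ℝ → ℝ → ℝ) :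
    pd m k (fun x y => c * v x y) = fun x y => c * pd m k v x y := by
  have hy : ∀ k v, pdy^[k] (fun x y => c * v x y) = fun x y => c * pdy^[k] v x y := by
    intro k
    induction k with
    | zero => intro v; rfl
    | succ k ih =>
      intro v
      rw [Function.iterate_succ_apply, Function.iterate_succ_apply, pdy_const_mul, ih]
  have hx : ∀ m v, pdx^[m] (fun x y => c * v x y) = fun x y => c * pdx^[m] v x y := by
    intro m
    induction m with
    | zero => intro v; rfl
    | succ m ih =>
      intro m'
      rw [Function.iterate_succ_apply, Function.iterate_succ_apply, pdx_const_mul, ih]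
  unfold pd
  rw [hy, hx]

-- from s6.lean
theorem pde_rec {M : ℕ} (hM : 2 ≤ M) {a : ℝ} (ha : a ≠ 0) {u f : ℝ → ℝ → ℝ}
    (hU : IsOpen U)
    (hu : ContDiffOn ℝ ((M + 1 : ℕ)) (uncurry u) U)
    (hf : ContDiffOn ℝ ((M - 1 : ℕ)) (uncurry f) U)
    (hpde : ∀ p ∈ U, a * (pd 2 0 u p.1 p.2 + pd 0 2 u p.1 p.2) = - f p.1 p.2)
    (m n : ℕ) (hmn : m + n ≤ M - 2) (hp : p ∈ U) :
    pd (m + 2) n u p.1 p.2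
      = - pd m (n + 2) u p.1 p.2 - (1 / a) * pd m n f p.1 p.2 := by
  -- the sum function
  have hS : ∀ q ∈ U, (fun x y => pd 2 0 u x y + pd 0 2 u x y) q.1 q.2
      = (fun x y => -(1 / a) * f x y) q.1 q.2 := by
    intro q hq
    have := hpde q hq
    field_simp
    linarith [hpde q hq]
  have h1 : pd m n (fun x y => pd 2 0 u x y + pd 0 2 u x y) p.1 p.2
      = pd m n (fun x y => -(1 / a) * f x y) p.1 p.2 := pd_congr_on hU m n hS hp
  have h2 : pd m n (fun x y => -(1 / a) * f x y) p.1 p.2 = -(1 / a) * pd m n f p.1 p.2 := by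
    rw [pd_const_mul]
  have hreg2 : ContDiffOn ℝ ((m + n : ℕ)) (uncurry (pd 2 0 u)) U := by
    refine contDiffOn_pd hU (n := m + n) (m := 2) (k := 0) (hu.of_le ?_)
    exact_mod_cast by omega
  have hreg02 : ContDiffOn ℝ ((m + n : ℕ)) (uncurry (pd 0 2 u)) U := by
    refine contDiffOn_pd hU (n := m + n) (m := 0) (k := 2) (hu.of_le ?_)
    exact_mod_cast by omega
  have h3 : pd m n (fun x y => pd 2 0 u x y + pd 0 2 u x y) p.1 p.2
      = pd m n (pd 2 0 u) p.1 p.2 + pd m n (pd 0 2 u) p.1 p.2 := by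
    have := pd_add hU m n hreg2 hreg02 hp
    exact this
  -- identify the two pieces
  have h4 : pd m n (pd 2 0 u) p.1 p.2 = pd (m + 2) n u p.1 p.2 := by
    unfold pd
    have hsw : ∀ q ∈ U, pdy^[n] (pdx^[2] (pdy^[0] u)) q.1 q.2
        = pdx^[2] (pdy^[n] u) q.1 q.2 := by
      intro q hq
      exact swap_pdy_iter_pdx_iter hU n 2 (hu.of_le (by exact_mod_cast by omega)) hq
    have := pdx_iter_congr_on hU m hsw hp
    rw [this, ← Function.iterate_add_apply pdx m 2 (pdy^[n] u)]
  have h5 : pd m n (pd 0 2 u) p.1 p.2 = pd m (n + 2) u p.1 p.2 := by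
    unfold pd
    rw [show pdy^[n] (pdx^[0] (pdy^[2] u)) = pdy^[n + 2] u from
      (Function.iterate_add_apply pdy n 2 u).symm]
  rw [h4, h5] at h3
  linarith [h1, h3, h2]

-- from s7.lean
theorem closed_form {M : ℕ} (hM : 2 ≤ M) {a : ℝ} (ha : a ≠ 0) {u f : ℝ → ℝ → ℝ}
    (hU : IsOpen U)
    (hu : ContDiffOn ℝ ((M + 1 : ℕ)) (uncurry u) U)
    (hf : ContDiffOn ℝ ((M - 1 : ℕ)) (uncurry f) U)
    (hpde : ∀ p ∈ U, a * (pd 2 0 u p.1 p.2 + pd 0 2 u p.1 p.2) = - f p.1 p.2)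
    (hp : p ∈ U) (k r : ℕ) (hr : r ≤ 1) :
    ∀ n, 2 * k + r + n ≤ M →
    pd (2 * k + r) n u p.1 p.2
      = (-1 : ℝ) ^ k * pd r (n + 2 * k) u p.1 p.2
        + (1 / a) * ∑ l ∈ Icc 1 k,
            (-1 : ℝ) ^ l * pd (2 * k + r - 2 * l) (n + 2 * l - 2) f p.1 p.2 := by
  induction k with
  | zero => intro n _; simp
  | succ k ih =>
    intro n hn
    have hrec := pde_rec hM ha hU hu hf hpde (2 * k + r) n (by omega) hp
    have hIH := ih (n + 2) (by omega)
    rw [show 2 * (k + 1) + r = 2 * k + r + 2 by omega, hrec, hIH,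
      show n + 2 + 2 * k = n + 2 * (k + 1) by omega]
    have esum : ∑ l ∈ Icc 1 (k + 1),
        (-1 : ℝ) ^ l * pd (2 * k + r + 2 - 2 * l) (n + 2 * l - 2) f p.1 p.2
        = -(∑ l ∈ Icc 1 k, (-1 : ℝ) ^ l * pd (2 * k + r - 2 * l) (n + 2 + 2 * l - 2) f p.1 p.2)
          - pd (2 * k + r) n f p.1 p.2 := by
      rw [← Finset.Ico_add_one_right_eq_Icc 1 (k + 1), ← Finset.Ico_add_one_right_eq_Icc 1 k,
        Finset.sum_Ico_eq_sum_range, Finset.sum_Ico_eq_sum_range]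
      simp only [Nat.add_sub_cancel, show k + 1 + 1 - 1 = k + 1 by omega,
        show k + 1 - 1 = k by omega]
      rw [Finset.sum_range_succ']
      have hterm : ∀ i ∈ Finset.range k,
          (-1 : ℝ) ^ (1 + (i + 1)) * pd (2 * k + r + 2 - 2 * (1 + (i + 1)))
              (n + 2 * (1 + (i + 1)) - 2) f p.1 p.2
          = -((-1 : ℝ) ^ (1 + i) * pd (2 * k + r - 2 * (1 + i))
              (n + 2 + 2 * (1 + i) - 2) f p.1 p.2) := by
        intro i _
        rw [show 2 * k + r + 2 - 2 * (1 + (i + 1)) = 2 * k + r - 2 * (1 + i) by omega,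
          show n + 2 * (1 + (i + 1)) - 2 = n + 2 + 2 * (1 + i) - 2 by omega,
          show (1 : ℕ) + (i + 1) = (1 + i) + 1 by omega, pow_succ]
        ring
      rw [Finset.sum_congr rfl hterm]
      rw [Finset.sum_neg_distrib]
      rw [show 2 * k + r + 2 - 2 * (1 + 0) = 2 * k + r by omega,
        show n + 2 * (1 + 0) - 2 = n by omega]
      ring
    rw [esum, pow_succ]
    ring

-- from s8.lean
lemma mem_Lam {M : ℕ} {p : ℕ × ℕ} : p ∈ Lam M ↔ p.1 + p.2 ≤ M := by
  simp only [Lam, Finset.mem_filter, Finset.mem_product, Finset.mem_range]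
  omega

lemma mem_Lam1 {M : ℕ} {p : ℕ × ℕ} : p ∈ Lam1 M ↔ p.1 + p.2 ≤ M ∧ p.1 ≤ 1 := by
  simp only [Lam1, Finset.mem_filter, mem_Lam]

lemma sum_reindex1 (M : ℕ) (Du : ℕ → ℕ → ℝ) (x y : ℝ) :
    ∑ p ∈ Lam1 M, Du p.1 p.2 * Gpoly p.1 p.2 x y
      = ∑ p ∈ Lam M, (-1 : ℝ) ^ (p.1 / 2) * Du (p.1 % 2) (p.2 + 2 * (p.1 / 2))
          * x ^ p.1 * y ^ p.2 / (Nat.factorial p.1 * Nat.factorial p.2 : ℝ) := by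
  simp_rw [Gpoly, Finset.mul_sum]
  rw [Finset.sum_sigma']
  refine Finset.sum_nbij' (fun q => (q.1.1 + 2 * q.2, q.1.2 - 2 * q.2))
    (fun p => ⟨(p.1 % 2, p.2 + 2 * (p.1 / 2)), p.1 / 2⟩) ?_ ?_ ?_ ?_ ?_
  · rintro ⟨⟨m, n⟩, l⟩ hq
    simp only [Finset.mem_sigma, mem_Lam1, Finset.mem_range] at hq
    simp only [mem_Lam]
    omega
  · rintro ⟨m, n⟩ hp
    simp only [mem_Lam] at hp
    simp only [Finset.mem_sigma, mem_Lam1, Finset.mem_range]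
    omega
  · rintro ⟨⟨m, n⟩, l⟩ hq
    simp only [Finset.mem_sigma, mem_Lam1, Finset.mem_range] at hq
    dsimp only
    rw [show (m + 2 * l) % 2 = m from by omega, show (m + 2 * l) / 2 = l from by omega,
      show n - 2 * l + 2 * l = n from by omega]
  · rintro ⟨m, n⟩ hp
    simp only [mem_Lam] at hp
    simp only [Prod.mk.injEq]
    omega
  · rintro ⟨⟨m, n⟩, l⟩ hq
    simp only [Finset.mem_sigma, mem_Lam1, Finset.mem_range] at hq
    have h1 : (m + 2 * l) % 2 = m := by omega
    have h2 : (m + 2 * l) / 2 = l := by omega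
    have h3 : n - 2 * l + 2 * ((m + 2 * l) / 2) = n := by omega
    simp only [h1, h2, h3]
    rw [show n - 2 * l + 2 * l = n from by omega]
    ring

lemma sum_reindex2 (M : ℕ) (hM : 2 ≤ M) (Df : ℕ → ℕ → ℝ) (x y : ℝ) :
    ∑ p ∈ Lam (M - 2), Df p.1 p.2 * Hpoly p.1 p.2 x y
      = ∑ p ∈ Lam M, (∑ l ∈ Finset.Icc 1 (p.1 / 2),
          (-1 : ℝ) ^ l * Df (p.1 - 2 * l) (p.2 + 2 * l - 2))
          * x ^ p.1 * y ^ p.2 / (Nat.factorial p.1 * Nat.factorial p.2 : ℝ) := by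
  simp_rw [Hpoly, Finset.mul_sum, Finset.sum_mul, Finset.sum_div]
  rw [Finset.sum_sigma', Finset.sum_sigma']
  refine Finset.sum_nbij' (fun q => ⟨(q.1.1 + 2 * q.2, q.1.2 + 2 - 2 * q.2), q.2⟩)
    (fun q => ⟨(q.1.1 - 2 * q.2, q.1.2 + 2 * q.2 - 2), q.2⟩) ?_ ?_ ?_ ?_ ?_
  · rintro ⟨⟨m, n⟩, l⟩ hq
    simp only [Finset.mem_sigma, mem_Lam, Finset.mem_Icc] at hq ⊢
    omega
  · rintro ⟨⟨m, n⟩, l⟩ hq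
    simp only [Finset.mem_sigma, mem_Lam, Finset.mem_Icc] at hq ⊢
    omega
  · rintro ⟨⟨m, n⟩, l⟩ hq
    simp only [Finset.mem_sigma, mem_Lam, Finset.mem_Icc] at hq
    dsimp only
    rw [show m + 2 * l - 2 * l = m from by omega,
      show n + 2 - 2 * l + 2 * l - 2 = n from by omega]
  · rintro ⟨⟨m, n⟩, l⟩ hq
    simp only [Finset.mem_sigma, mem_Lam, Finset.mem_Icc] at hq
    dsimp only
    rw [show m - 2 * l + 2 * l = m from by omega,
      show n + 2 * l - 2 + 2 - 2 * l = n from by omega]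
  · rintro ⟨⟨m, n⟩, l⟩ hq
    simp only [Finset.mem_sigma, mem_Lam, Finset.mem_Icc] at hq
    have h1 : m + 2 * l - 2 * l = m := by omega
    have h2 : n + 2 - 2 * l + 2 * l - 2 = n := by omega
    simp only [h1, h2]
    ring

-- from s9.lean
lemma chain_line {xs ys x y t : ℝ}
    (hdiff : DifferentiableAt ℝ (uncurry v) (xs + t * x, ys + t * y)) :
    HasDerivAt (fun s => v (xs + s * x) (ys + s * y))
      (x * pdx v (xs + t * x) (ys + t * y) + y * pdy v (xs + t * x) (ys + t * y)) t := by
  have hγ : HasDerivAt (fun s : ℝ => ((xs + s * x, ys + s * y) : ℝ × ℝ)) (x, y) t := by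
    have h1 : HasDerivAt (fun s : ℝ => xs + s * x) x t := by
      simpa using ((hasDerivAt_id t).mul_const x).const_add xs
    have h2 : HasDerivAt (fun s : ℝ => ys + s * y) y t := by
      simpa using ((hasDerivAt_id t).mul_const y).const_add ys
    exact h1.prodMk h2
  have hc := hdiff.hasFDerivAt.comp_hasDerivAt t hγ
  have hval : fderiv ℝ (uncurry v) (xs + t * x, ys + t * y) (x, y)
      = x * pdx v (xs + t * x) (ys + t * y) + y * pdy v (xs + t * x) (ys + t * y) := by
    rw [pdx_eq_fderiv hdiff, pdy_eq_fderiv hdiff]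
    have hxy : (x, y) = x • ((1 : ℝ), (0 : ℝ)) + y • ((0 : ℝ), (1 : ℝ)) := by
      simp [Prod.ext_iff]
    rw [hxy, map_add, map_smul, map_smul, smul_eq_mul, smul_eq_mul]
  rw [← hval]
  exact hc

lemma pascal_step (k : ℕ) (x y : ℝ) (D : ℕ → ℕ → ℝ) :
    ∑ j ∈ range (k + 1), (k.choose j : ℝ) * x ^ j * y ^ (k - j)
        * (x * D (j + 1) (k - j) + y * D j (k - j + 1))
      = ∑ j ∈ range (k + 2), ((k + 1).choose j : ℝ) * x ^ j * y ^ (k + 1 - j) * D j (k + 1 - j) := by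
  have hL : ∑ j ∈ range (k + 1), (k.choose j : ℝ) * x ^ j * y ^ (k - j)
        * (x * D (j + 1) (k - j) + y * D j (k - j + 1))
      = (∑ j ∈ range (k + 1), (k.choose j : ℝ) * x ^ (j + 1) * y ^ (k - j) * D (j + 1) (k - j))
        + ∑ j ∈ range (k + 1), (k.choose j : ℝ) * x ^ j * y ^ (k - j + 1) * D j (k - j + 1) := by
    rw [← Finset.sum_add_distrib]
    refine Finset.sum_congr rfl fun j _ => by ring
  rw [hL, Finset.sum_range_succ' (fun j => ((k + 1).choose j : ℝ) * x ^ j * y ^ (k + 1 - j)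
    * D j (k + 1 - j)) (k + 1)]
  have hsplit : ∀ j ∈ range (k + 1),
      ((k + 1).choose (j + 1) : ℝ) * x ^ (j + 1) * y ^ (k + 1 - (j + 1)) * D (j + 1) (k + 1 - (j + 1))
      = (k.choose j : ℝ) * x ^ (j + 1) * y ^ (k - j) * D (j + 1) (k - j)
        + (k.choose (j + 1) : ℝ) * x ^ (j + 1) * y ^ (k - j) * D (j + 1) (k - j) := by
    intro j _
    rw [Nat.choose_succ_succ, show k + 1 - (j + 1) = k - j from by omega]
    push_cast
    ring
  rw [Finset.sum_congr rfl hsplit, Finset.sum_add_distrib]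
  have hT2 : ∑ j ∈ range (k + 1), (k.choose j : ℝ) * x ^ j * y ^ (k - j + 1) * D j (k - j + 1)
      = (∑ j ∈ range k, (k.choose (j + 1) : ℝ) * x ^ (j + 1) * y ^ (k - j) * D (j + 1) (k - j))
        + (k.choose 0 : ℝ) * x ^ 0 * y ^ (k + 1) * D 0 (k + 1) := by
    rw [Finset.sum_range_succ' (fun j => (k.choose j : ℝ) * x ^ j * y ^ (k - j + 1)
      * D j (k - j + 1)) k]
    congr 1
    refine Finset.sum_congr rfl fun j hj => ?_
    simp only [Finset.mem_range] at hj
    rw [show k - (j + 1) + 1 = k - j from by omega]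
  have hS2 : ∑ j ∈ range (k + 1), (k.choose (j + 1) : ℝ) * x ^ (j + 1) * y ^ (k - j) * D (j + 1) (k - j)
      = ∑ j ∈ range k, (k.choose (j + 1) : ℝ) * x ^ (j + 1) * y ^ (k - j) * D (j + 1) (k - j) := by
    rw [Finset.sum_range_succ, Nat.choose_succ_self]
    simp
  rw [hT2, hS2]
  simp only [Nat.choose_zero_right, Nat.choose_self, pow_zero, Nat.cast_one,
    show k + 1 - 0 = k + 1 from rfl]
  ring

-- from s10.lean
section chain
variable {Mu : ℕ} {u : ℝ → ℝ → ℝ} {xs ys x y : ℝ}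

/-- value of the `k`-th derivative of `t ↦ u (xs+t*x) (ys+t*y)`. -/
noncomputable def Aval (u : ℝ → ℝ → ℝ) (xs ys x y : ℝ) (k : ℕ) (t : ℝ) : ℝ :=
  ∑ j ∈ range (k + 1), (k.choose j : ℝ) * x ^ j * y ^ (k - j)
    * pd j (k - j) u (xs + t * x) (ys + t * y)

lemma chainA (hU : IsOpen U) (hu : ContDiffOn ℝ ((Mu + 1 : ℕ)) (uncurry u) U)
    {k : ℕ} (hk : k + 1 ≤ Mu) {t : ℝ} (ht : (xs + t * x, ys + t * y) ∈ U) :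
    HasDerivAt (Aval u xs ys x y k) (Aval u xs ys x y (k + 1) t) t := by
  have hterm : ∀ j ∈ range (k + 1),
      HasDerivAt (fun s => (k.choose j : ℝ) * x ^ j * y ^ (k - j)
          * pd j (k - j) u (xs + s * x) (ys + s * y))
        ((k.choose j : ℝ) * x ^ j * y ^ (k - j)
          * (x * pd (j + 1) (k - j) u (xs + t * x) (ys + t * y)
             + y * pd j (k - j + 1) u (xs + t * x) (ys + t * y))) t := by
    intro j hj
    simp only [Finset.mem_range] at hj
    have hjk : j ≤ k := by omega
    have hdiff : DifferentiableAt ℝ (uncurry (pd j (k - j) u)) (xs + t * x, ys + t * y) := by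
      refine diffAt_of_contDiffOn hU (n := 0) (contDiffOn_pd hU (n := 1) (hu.of_le ?_)) ht
      exact_mod_cast by omega
    have hc := chain_line (v := pd j (k - j) u) hdiff
    have hx1 : pdx (pd j (k - j) u) = pd (j + 1) (k - j) u := by
      unfold pd
      exact (Function.iterate_succ_apply' pdx j _).symm
    have hy1 : pdy (pd j (k - j) u) (xs + t * x) (ys + t * y)
        = pd j (k - j + 1) u (xs + t * x) (ys + t * y) := by
      refine pdy_pd hU j (k - j) (hu.of_le ?_) ht
      exact_mod_cast by omega
    rw [hx1, hy1] at hc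
    exact hc.const_mul _
  have hsum := HasDerivAt.fun_sum hterm
  have := pascal_step k x y (fun m n => pd m n u (xs + t * x) (ys + t * y))
  unfold Aval
  rw [show k + 1 + 1 = k + 2 from rfl, ← this]
  exact hsum

lemma chainA_top (hU : IsOpen U) (hu : ContDiffOn ℝ ((Mu + 1 : ℕ)) (uncurry u) U)
    {t : ℝ} (ht : (xs + t * x, ys + t * y) ∈ U) :
    HasDerivAt (Aval u xs ys x y Mu)
      (∑ j ∈ range (Mu + 1), (Mu.choose j : ℝ) * x ^ j * y ^ (Mu - j)
        * (x * pdx (pd j (Mu - j) u) (xs + t * x) (ys + t * y)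
           + y * pdy (pd j (Mu - j) u) (xs + t * x) (ys + t * y))) t := by
  refine HasDerivAt.fun_sum fun j hj => ?_
  simp only [Finset.mem_range] at hj
  have hdiff : DifferentiableAt ℝ (uncurry (pd j (Mu - j) u)) (xs + t * x, ys + t * y) := by
    refine diffAt_of_contDiffOn hU (n := 0) (contDiffOn_pd hU (n := 1) (hu.of_le ?_)) ht
    exact_mod_cast by omega
  exact (chain_line hdiff).const_mul _

lemma iterDeriv_eq (hU : IsOpen U) (hu : ContDiffOn ℝ ((Mu + 1 : ℕ)) (uncurry u) U)
    (hseg : ∀ t ∈ Set.Icc (0 : ℝ) 1, (xs + t * x, ys + t * y) ∈ U)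
    {k : ℕ} (hk : k ≤ Mu) :
    ∀ t ∈ Set.Icc (0 : ℝ) 1,
      iteratedDerivWithin k (fun s => u (xs + s * x) (ys + s * y)) (Set.Icc 0 1) t
        = Aval u xs ys x y k t := by
  induction k with
  | zero =>
    intro t ht
    rw [iteratedDerivWithin_zero]
    simp [Aval, pd]
  | succ k ih =>
    intro t ht
    rw [iteratedDerivWithin_succ]
    rw [derivWithin_congr (fun s hs => ih (by omega) s hs) (ih (by omega) t ht)]
    exact ((chainA hU hu (by omega) (hseg t ht)).hasDerivWithinAt).derivWithin
      ((uniqueDiffOn_Icc zero_lt_one) t ht)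
end chain

lemma taylor_reindex (M : ℕ) (D : ℕ → ℕ → ℝ) (x y : ℝ) :
    ∑ k ∈ range (M + 1), (k.factorial : ℝ)⁻¹
        * ∑ j ∈ range (k + 1), (k.choose j : ℝ) * x ^ j * y ^ (k - j) * D j (k - j)
      = ∑ p ∈ Lam M, D p.1 p.2 * x ^ p.1 * y ^ p.2
          / (Nat.factorial p.1 * Nat.factorial p.2 : ℝ) := by
  simp_rw [Finset.mul_sum]
  rw [Finset.sum_sigma']
  refine Finset.sum_nbij' (fun q => (q.2, q.1 - q.2)) (fun p => ⟨p.1 + p.2, p.1⟩) ?_ ?_ ?_ ?_ ?_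
  · rintro ⟨k, j⟩ hq
    simp only [Finset.mem_sigma, Finset.mem_range] at hq
    simp only [mem_Lam]
    omega
  · rintro ⟨m, n⟩ hp
    simp only [mem_Lam] at hp
    simp only [Finset.mem_sigma, Finset.mem_range]
    omega
  · rintro ⟨k, j⟩ hq
    simp only [Finset.mem_sigma, Finset.mem_range] at hq
    dsimp only
    rw [show j + (k - j) = k from by omega]
  · rintro ⟨m, n⟩ hp
    simp only [mem_Lam] at hp
    dsimp only
    rw [show m + n - m = n from by omega]
  · rintro ⟨k, j⟩ hq
    simp only [Finset.mem_sigma, Finset.mem_range] at hq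
    dsimp only
    have hjk : j ≤ k := by omega
    have hfac : (k.choose j : ℝ) * (Nat.factorial j * Nat.factorial (k - j) : ℝ)
        = (k.factorial : ℝ) := by
      exact_mod_cast congrArg (Nat.cast (R := ℝ))
        (by rw [← Nat.choose_mul_factorial_mul_factorial hjk]; ring)
    have h1 : (Nat.factorial j : ℝ) ≠ 0 := Nat.cast_ne_zero.mpr (Nat.factorial_ne_zero j)
    have h2 : (Nat.factorial (k - j) : ℝ) ≠ 0 := Nat.cast_ne_zero.mpr (Nat.factorial_ne_zero _)
    have h3 : (Nat.factorial k : ℝ) ≠ 0 := Nat.cast_ne_zero.mpr (Nat.factorial_ne_zero k)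
    field_simp
    linear_combination x ^ j * y ^ (k - j) * D j (k - j) * hfac


theorem stmt12
    (M : ℕ) (hM : 2 ≤ M) (a : ℝ) (ha : 0 < a) (u f : ℝ → ℝ → ℝ) (xs ys : ℝ)
    (U : Set (ℝ × ℝ)) (hU : IsOpen U) (hconv : Convex ℝ U) (hmem : (xs, ys) ∈ U)
    (hu : ContDiffOn ℝ (M + 1 : ℕ) (Function.uncurry u) U)
    (hf : ContDiffOn ℝ (M - 1 : ℕ) (Function.uncurry f) U)
    (hpde : ∀ p ∈ U, a * (pd 2 0 u p.1 p.2 + pd 0 2 u p.1 p.2) = - f p.1 p.2) :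
    ∃ C > (0 : ℝ), ∃ h₀ > (0 : ℝ), ∀ h ∈ Set.Ioc (0 : ℝ) h₀, ∀ x y : ℝ,
      |x| ≤ 2 * h → |y| ≤ 2 * h →
      |u (xs + x) (ys + y)
        - (∑ p ∈ Lam1 M, pd p.1 p.2 u xs ys * Gpoly p.1 p.2 x y)
        - (1 / a) * (∑ p ∈ Lam (M - 2), pd p.1 p.2 f xs ys * Hpoly p.1 p.2 x y)|
        ≤ C * h ^ (M + 1) := by
  classical
  have ha' : a ≠ 0 := ne_of_gt ha
  obtain ⟨ε, hε, hball⟩ := Metric.isOpen_iff.mp hU _ hmem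
  set ρ : ℝ := ε / 2 with hρdef
  have hρ : 0 < ρ := by positivity
  set K : Set (ℝ × ℝ) := Metric.closedBall (xs, ys) ρ with hKdef
  have hKU : K ⊆ U := (Metric.closedBall_subset_ball (by simp only [hρdef]; linarith)).trans hball
  have hKc : IsCompact K := isCompact_closedBall _ _
  -- bounds for the top-order derivatives on K
  have hbnd : ∀ j : ℕ, ∃ B : ℝ, ∀ q ∈ K, j ≤ M →
      |pdx (pd j (M - j) u) q.1 q.2| ≤ B ∧ |pdy (pd j (M - j) u) q.1 q.2| ≤ B := by
    intro j
    by_cases hj : j ≤ M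
    · have h1 : ContDiffOn ℝ ((1 : ℕ)) (Function.uncurry (pd j (M - j) u)) U :=
        contDiffOn_pd hU (n := 1) (hu.of_le (by exact_mod_cast Nat.le_of_eq (by omega)))
      have hc1 : ContinuousOn (Function.uncurry (pdx (pd j (M - j) u))) U :=
        (contDiffOn_pdx hU (n := 0) (by exact_mod_cast h1)).continuousOn
      have hc2 : ContinuousOn (Function.uncurry (pdy (pd j (M - j) u))) U :=
        (contDiffOn_pdy hU (n := 0) (by exact_mod_cast h1)).continuousOn
      obtain ⟨B1, hB1⟩ := hKc.exists_bound_of_continuousOn (hc1.mono hKU)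
      obtain ⟨B2, hB2⟩ := hKc.exists_bound_of_continuousOn (hc2.mono hKU)
      refine ⟨max B1 B2, fun q hq _ => ⟨?_, ?_⟩⟩
      · exact le_trans (by simpa [Real.norm_eq_abs, Function.uncurry] using hB1 q hq) (le_max_left _ _)
      · exact le_trans (by simpa [Real.norm_eq_abs, Function.uncurry] using hB2 q hq) (le_max_right _ _)
    · exact ⟨0, fun q _ hj' => absurd hj' hj⟩
  choose B hB using hbnd
  set Cc : ℝ := 1 + ∑ j ∈ Finset.range (M + 1),
    (M.choose j : ℝ) * 4 * 2 ^ M * (|B j| + 1) with hCcdef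
  have hCc : 0 < Cc := by
    have : (0 : ℝ) ≤ ∑ j ∈ Finset.range (M + 1), (M.choose j : ℝ) * 4 * 2 ^ M * (|B j| + 1) :=
      Finset.sum_nonneg fun j _ => by positivity
    linarith
  refine ⟨Cc, hCc, ρ / 4, by positivity, ?_⟩
  rintro h ⟨hh0, hh1⟩ x y hx hy
  have hhρ : 2 * h ≤ ρ / 2 := by linarith
  have hsegK : ∀ t ∈ Set.Icc (0 : ℝ) 1, ((xs + t * x, ys + t * y) : ℝ × ℝ) ∈ K := by
    intro t ht
    simp only [hKdef, Metric.mem_closedBall, Prod.dist_eq, Real.dist_eq]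
    rw [show xs + t * x - xs = t * x by ring, show ys + t * y - ys = t * y by ring]
    have h1 : |t| ≤ 1 := abs_le.mpr ⟨by linarith [ht.1], ht.2⟩
    have hxb : |t * x| ≤ ρ := by
      rw [abs_mul]
      nlinarith [abs_nonneg x, abs_nonneg t]
    have hyb : |t * y| ≤ ρ := by
      rw [abs_mul]
      nlinarith [abs_nonneg y, abs_nonneg t]
    exact max_le hxb hyb
  have hsegU : ∀ t ∈ Set.Icc (0 : ℝ) 1, ((xs + t * x, ys + t * y) : ℝ × ℝ) ∈ U :=
    fun t ht => hKU (hsegK t ht)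
  -- smoothness of the composition
  have hγ : ContDiff ℝ ((M : ℕ)) (fun s : ℝ => ((xs + s * x, ys + s * y) : ℝ × ℝ)) :=
    (contDiff_const.add (contDiff_id.mul contDiff_const)).prodMk
      (contDiff_const.add (contDiff_id.mul contDiff_const))
  have hg : ContDiffOn ℝ ((M : ℕ)) (fun s => u (xs + s * x) (ys + s * y)) (Set.Icc 0 1) := by
    have := (hu.of_le (show ((M : ℕ) : WithTop ℕ∞) ≤ ((M + 1 : ℕ) : WithTop ℕ∞) from
      by exact_mod_cast Nat.le_succ M)).comp hγ.contDiffOn (fun t ht => hsegU t ht)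
    exact this
  have hdiffM : DifferentiableOn ℝ
      (iteratedDerivWithin M (fun s => u (xs + s * x) (ys + s * y)) (Set.Icc 0 1))
      (Set.Ioo 0 1) := by
    have hA : DifferentiableOn ℝ (Aval u xs ys x y M) (Set.Ioo 0 1) := fun t ht =>
      (chainA_top hU hu (hsegU t (Set.Ioo_subset_Icc_self ht))).differentiableAt.differentiableWithinAt
    exact hA.congr fun t ht => iterDeriv_eq hU hu hsegU le_rfl t (Set.Ioo_subset_Icc_self ht)
  have hI : Set.uIcc (0 : ℝ) 1 = Set.Icc 0 1 := Set.uIcc_of_le zero_le_one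
  have hO : Set.uIoo (0 : ℝ) 1 = Set.Ioo 0 1 := Set.uIoo_of_le zero_le_one
  obtain ⟨t', ht', herr⟩ := taylor_mean_remainder_lagrange (n := M) (x₀ := 0) (x := 1) zero_ne_one
    (by rw [hI]; exact hg) (by rw [hI, hO]; exact hdiffM)
  rw [hO] at ht'
  rw [hI] at herr
  have ht'icc : t' ∈ Set.Icc (0 : ℝ) 1 := Set.Ioo_subset_Icc_self ht'
  -- identify the remainder
  have hrem : iteratedDerivWithin (M + 1) (fun s => u (xs + s * x) (ys + s * y))
      (Set.Icc 0 1) t'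
      = ∑ j ∈ Finset.range (M + 1), (M.choose j : ℝ) * x ^ j * y ^ (M - j)
          * (x * pdx (pd j (M - j) u) (xs + t' * x) (ys + t' * y)
             + y * pdy (pd j (M - j) u) (xs + t' * x) (ys + t' * y)) := by
    rw [iteratedDerivWithin_succ (n := M),
      derivWithin_congr (fun s hs => iterDeriv_eq hU hu hsegU le_rfl s hs)
        (iterDeriv_eq hU hu hsegU le_rfl t' ht'icc)]
    exact ((chainA_top hU hu (hsegU t' ht'icc)).hasDerivWithinAt).derivWithin
      (uniqueDiffOn_Icc zero_lt_one t' ht'icc)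
  -- identify the Taylor polynomial
  have hpoly : taylorWithinEval (fun s => u (xs + s * x) (ys + s * y)) M (Set.Icc 0 1) 0 1
      = ∑ p ∈ Lam M, pd p.1 p.2 u xs ys * x ^ p.1 * y ^ p.2
          / (Nat.factorial p.1 * Nat.factorial p.2 : ℝ) := by
    rw [taylor_within_apply]
    have h1 : ∀ k ∈ Finset.range (M + 1),
        ((k.factorial : ℝ)⁻¹ * ((1 : ℝ) - 0) ^ k)
            • iteratedDerivWithin k (fun s => u (xs + s * x) (ys + s * y)) (Set.Icc 0 1) 0
          = (k.factorial : ℝ)⁻¹ * ∑ j ∈ Finset.range (k + 1),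
              (k.choose j : ℝ) * x ^ j * y ^ (k - j) * pd j (k - j) u xs ys := by
      intro k hk
      simp only [Finset.mem_range] at hk
      rw [iterDeriv_eq hU hu hsegU (by omega) 0 (by norm_num)]
      have hA0 : Aval u xs ys x y k 0 = ∑ j ∈ Finset.range (k + 1),
          (k.choose j : ℝ) * x ^ j * y ^ (k - j) * pd j (k - j) u xs ys := by
        unfold Aval
        refine Finset.sum_congr rfl fun j hj => by norm_num
      rw [hA0]
      norm_num
    rw [Finset.sum_congr rfl h1, taylor_reindex M (fun m n => pd m n u xs ys) x y]
  -- link with the G/H sums via the PDE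
  have hsum : ∑ p ∈ Lam M, pd p.1 p.2 u xs ys * x ^ p.1 * y ^ p.2
        / (Nat.factorial p.1 * Nat.factorial p.2 : ℝ)
      = (∑ p ∈ Lam1 M, pd p.1 p.2 u xs ys * Gpoly p.1 p.2 x y)
        + (1 / a) * ∑ p ∈ Lam (M - 2), pd p.1 p.2 f xs ys * Hpoly p.1 p.2 x y := by
    rw [sum_reindex1 M (fun m n => pd m n u xs ys) x y,
      sum_reindex2 M hM (fun m n => pd m n f xs ys) x y, Finset.mul_sum,
      ← Finset.sum_add_distrib]
    refine Finset.sum_congr rfl fun p hp => ?_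
    rw [mem_Lam] at hp
    have hcf := closed_form hM ha' hU hu hf hpde hmem (p.1 / 2) (p.1 % 2) (by omega) p.2 (by omega)
    dsimp only at hcf
    rw [show 2 * (p.1 / 2) + p.1 % 2 = p.1 from by omega] at hcf
    rw [hcf]
    ring
  -- put everything together
  rw [show u (xs + x) (ys + y) = (fun s => u (xs + s * x) (ys + s * y)) 1 from by norm_num,
    sub_sub, ← hsum, ← hpoly, herr, hrem]
  -- bound the remainder term
  have hptK := hsegK t' ht'icc
  have habs : |∑ j ∈ Finset.range (M + 1), (M.choose j : ℝ) * x ^ j * y ^ (M - j)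
      * (x * pdx (pd j (M - j) u) (xs + t' * x) (ys + t' * y)
         + y * pdy (pd j (M - j) u) (xs + t' * x) (ys + t' * y))|
      ≤ (∑ j ∈ Finset.range (M + 1), (M.choose j : ℝ) * 4 * 2 ^ M * (|B j| + 1)) * h ^ (M + 1) := by
    refine le_trans (Finset.abs_sum_le_sum_abs _ _) ?_
    rw [Finset.sum_mul]
    refine Finset.sum_le_sum fun j hj => ?_
    simp only [Finset.mem_range] at hj
    have hjM : j ≤ M := by omega
    obtain ⟨hP, hQ⟩ := hB j _ hptK hjM
    have hW : |x * pdx (pd j (M - j) u) (xs + t' * x) (ys + t' * y)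
        + y * pdy (pd j (M - j) u) (xs + t' * x) (ys + t' * y)| ≤ 4 * h * (|B j| + 1) := by
      have e1 : |x * pdx (pd j (M - j) u) (xs + t' * x) (ys + t' * y)| ≤ 2 * h * (|B j| + 1) := by
        rw [abs_mul]
        have : |pdx (pd j (M - j) u) (xs + t' * x) (ys + t' * y)| ≤ |B j| + 1 :=
          le_trans hP (by linarith [le_abs_self (B j)])
        have hxnn : (0:ℝ) ≤ |x| := abs_nonneg _
        nlinarith [abs_nonneg (pdx (pd j (M - j) u) (xs + t' * x) (ys + t' * y))]
      have e2 : |y * pdy (pd j (M - j) u) (xs + t' * x) (ys + t' * y)| ≤ 2 * h * (|B j| + 1) := by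
        rw [abs_mul]
        have : |pdy (pd j (M - j) u) (xs + t' * x) (ys + t' * y)| ≤ |B j| + 1 :=
          le_trans hQ (by linarith [le_abs_self (B j)])
        have hynn : (0:ℝ) ≤ |y| := abs_nonneg _
        nlinarith [abs_nonneg (pdy (pd j (M - j) u) (xs + t' * x) (ys + t' * y))]
      calc |_ + _| ≤ _ + _ := abs_add_le _ _
        _ ≤ 4 * h * (|B j| + 1) := by linarith
    calc |(M.choose j : ℝ) * x ^ j * y ^ (M - j)
          * (x * pdx (pd j (M - j) u) (xs + t' * x) (ys + t' * y)
             + y * pdy (pd j (M - j) u) (xs + t' * x) (ys + t' * y))|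
        = (M.choose j : ℝ) * (|x| ^ j * (|y| ^ (M - j) * |x * pdx (pd j (M - j) u) (xs + t' * x) (ys + t' * y)
             + y * pdy (pd j (M - j) u) (xs + t' * x) (ys + t' * y)|)) := by
          rw [abs_mul, abs_mul, abs_mul, abs_pow, abs_pow, Nat.abs_cast]
          ring
      _ ≤ (M.choose j : ℝ) * ((2 * h) ^ j * ((2 * h) ^ (M - j) * (4 * h * (|B j| + 1)))) := by
          gcongr
          all_goals first | exact hx | exact hy | exact hW | positivity
      _ = (M.choose j : ℝ) * 4 * 2 ^ M * (|B j| + 1) * h ^ (M + 1) := by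
          rw [show (2 * h) ^ j * ((2 * h) ^ (M - j) * (4 * h * (|B j| + 1)))
            = (2 * h) ^ (j + (M - j)) * (4 * h * (|B j| + 1)) from by rw [pow_add]; ring,
            show j + (M - j) = M from by omega, mul_pow]
          ring
  have hfac1 : (1 : ℝ) ≤ ((M + 1).factorial : ℝ) := by
    exact_mod_cast Nat.one_le_iff_ne_zero.mpr (Nat.factorial_ne_zero _)
  have hsum_le : (∑ j ∈ Finset.range (M + 1), (M.choose j : ℝ) * 4 * 2 ^ M * (|B j| + 1))
      * h ^ (M + 1) ≤ Cc * h ^ (M + 1) := by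
    have hh : (0 : ℝ) ≤ h ^ (M + 1) := by positivity
    have : (∑ j ∈ Finset.range (M + 1), (M.choose j : ℝ) * 4 * 2 ^ M * (|B j| + 1)) ≤ Cc := by
      simp only [hCcdef]; linarith
    exact mul_le_mul_of_nonneg_right this hh
  rw [abs_div, abs_mul]
  calc |_| * |((1 : ℝ) - 0) ^ (M + 1)| / |((M + 1).factorial : ℝ)|
      ≤ |_| := by
        rw [show |((1 : ℝ) - 0) ^ (M + 1)| = 1 from by norm_num, Nat.abs_cast, mul_one]
        exact div_le_self (abs_nonneg _) hfac1
    _ ≤ Cc * h ^ (M + 1) := le_trans habs hsum_le
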